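/- In the real single-interference setting with δ ≠ 0: if γ := σₙ² tan τ / δ ≤ 0 then MSE(λ_ε) is strictly monotonically decreasing in λ_ε on [0,∞); its infimum is the zero-forcing MSE σₙ²(tan²τ + 1) attained in the limit λ_ε → ∞. -/

import Mathlib

/-- if `δ ≠ 0` and `γ = σₙ² tan τ / δ ≤ 0`, the RZF MSE is strictly
decreasing on `[0,∞)`, with infimum the zero-forcing MSE `σₙ²(tan²τ+1)`
attained in the limit `λ_ε → ∞`. -/
theorem rzf_mse_decreasing_of_gamma_nonpos
    (τ σ12 σn2 c1 : ℝ)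
    (hτ : τ ∈ Set.Ioo (-(Real.pi / 2)) (Real.pi / 2))
    (hσ12 : 0 < σ12) (hσn2 : 0 < σn2)
    (g : ℝ → ℝ) (hg : ∀ l, g l = l * Real.cos τ ^ 2 + σ12 * Real.cos τ ^ 2 + σn2)
    (δ : ℝ) (hδ : δ = σn2 * Real.tan τ - c1 * Real.cos τ) (hδ0 : δ ≠ 0)
    (MSE : ℝ → ℝ)
    (hMSE : ∀ l, MSE l = δ ^ 2 * (σ12 * Real.cos τ ^ 2 + σn2) / g l ^ 2
            - 2 * σn2 * δ * Real.tan τ / g l + σn2 * (Real.tan τ ^ 2 + 1))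
    (γ : ℝ) (hγ : γ = σn2 * Real.tan τ / δ) (hγ0 : γ ≤ 0) :
    StrictAntiOn MSE (Set.Ici 0) ∧
    Filter.Tendsto MSE Filter.atTop (nhds (σn2 * (Real.tan τ ^ 2 + 1))) ∧
    IsGLB (MSE '' Set.Ici 0) (σn2 * (Real.tan τ ^ 2 + 1)) := by
  have hc : 0 < Real.cos τ := Real.cos_pos_of_mem_Ioo hτ
  have hc2 : 0 < Real.cos τ ^ 2 := by positivity
  have ha : 0 < σ12 * Real.cos τ ^ 2 + σn2 := by positivity
  have hA : 0 < δ ^ 2 * (σ12 * Real.cos τ ^ 2 + σn2) := by positivity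
  have hB : σn2 * Real.tan τ * δ ≤ 0 := by
    have h1 : σn2 * Real.tan τ * δ = (σn2 * Real.tan τ / δ) * δ ^ 2 := by
      field_simp
    rw [h1]
    exact mul_nonpos_of_nonpos_of_nonneg (hγ ▸ hγ0) (sq_nonneg δ)
  have hgpos : ∀ l : ℝ, 0 ≤ l → 0 < g l := by
    intro l hl
    rw [hg]
    have : 0 ≤ l * Real.cos τ ^ 2 := by positivity
    linarith
  -- strict antitonicity
  have hanti : StrictAntiOn MSE (Set.Ici 0) := by
    intro x hx y hy hxy
    have hgx := hgpos x hx
    have hgy := hgpos y hy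
    have hgxy : g x < g y := by
      rw [hg, hg]
      have := mul_lt_mul_of_pos_right hxy hc2
      linarith
    rw [hMSE, hMSE]
    have hux : (0:ℝ) < 1 / g x := by positivity
    have huy : (0:ℝ) < 1 / g y := by positivity
    have huxy : 1 / g y < 1 / g x := one_div_lt_one_div_of_lt hgx hgxy
    have e1 : δ ^ 2 * (σ12 * Real.cos τ ^ 2 + σn2) / g x ^ 2
        = δ ^ 2 * (σ12 * Real.cos τ ^ 2 + σn2) * (1 / g x) ^ 2 := by
      field_simp
    have e2 : δ ^ 2 * (σ12 * Real.cos τ ^ 2 + σn2) / g y ^ 2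
        = δ ^ 2 * (σ12 * Real.cos τ ^ 2 + σn2) * (1 / g y) ^ 2 := by
      field_simp
    have e3 : 2 * σn2 * δ * Real.tan τ / g x = 2 * (σn2 * Real.tan τ * δ) * (1 / g x) := by
      field_simp
    have e4 : 2 * σn2 * δ * Real.tan τ / g y = 2 * (σn2 * Real.tan τ * δ) * (1 / g y) := by
      field_simp
    rw [e1, e2, e3, e4]
    nlinarith [mul_pos hA (mul_pos (sub_pos.mpr huxy) (add_pos huy hux)),
      mul_nonneg (neg_nonneg.mpr hB) (le_of_lt (sub_pos.mpr huxy))]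
  -- limit
  have hgtop : Filter.Tendsto g Filter.atTop Filter.atTop := by
    have : Filter.Tendsto (fun l : ℝ => l * Real.cos τ ^ 2 + (σ12 * Real.cos τ ^ 2 + σn2))
        Filter.atTop Filter.atTop :=
      Filter.tendsto_atTop_add_const_right _ _ (Filter.Tendsto.atTop_mul_const hc2 Filter.tendsto_id)
    refine this.congr (fun l => ?_)
    rw [hg]; ring
  have hg2top : Filter.Tendsto (fun l => g l ^ 2) Filter.atTop Filter.atTop := by
    have := Filter.Tendsto.atTop_mul_atTop₀ hgtop hgtop
    refine this.congr (fun l => ?_)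
    ring
  have ht1 : Filter.Tendsto (fun l => δ ^ 2 * (σ12 * Real.cos τ ^ 2 + σn2) / g l ^ 2)
      Filter.atTop (nhds 0) :=
    Filter.Tendsto.div_atTop tendsto_const_nhds hg2top
  have ht2 : Filter.Tendsto (fun l => 2 * σn2 * δ * Real.tan τ / g l)
      Filter.atTop (nhds 0) :=
    Filter.Tendsto.div_atTop tendsto_const_nhds hgtop
  have htend : Filter.Tendsto MSE Filter.atTop (nhds (σn2 * (Real.tan τ ^ 2 + 1))) := by
    have h := (ht1.sub ht2).add
      (tendsto_const_nhds (x := σn2 * (Real.tan τ ^ 2 + 1)) (f := Filter.atTop))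
    rw [sub_zero, zero_add] at h
    refine Filter.Tendsto.congr (fun l => ?_) h
    rw [hMSE]
  have hlb : σn2 * (Real.tan τ ^ 2 + 1) ∈ lowerBounds (MSE '' Set.Ici 0) := by
    rintro m ⟨l, hl, rfl⟩
    have hgl := hgpos l hl
    rw [hMSE]
    have h1 : 0 < δ ^ 2 * (σ12 * Real.cos τ ^ 2 + σn2) / g l ^ 2 := by positivity
    have h2 : 2 * σn2 * δ * Real.tan τ / g l ≤ 0 := by
      apply div_nonpos_of_nonpos_of_nonneg _ (le_of_lt hgl)
      nlinarith
    linarith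
  have hglb : ∀ b ∈ lowerBounds (MSE '' Set.Ici 0), b ≤ σn2 * (Real.tan τ ^ 2 + 1) := by
    intro b hb
    refine ge_of_tendsto htend ?_
    filter_upwards [Filter.eventually_ge_atTop (0:ℝ)] with l hl
    exact hb ⟨l, hl, rfl⟩
  exact ⟨hanti, htend, hlb, hglb⟩
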